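/- Let g₁ be a finite-dimensional real vector space of real-analytic vector fields on a connected open set U ⊆ ℝⁿ, and x₀ ∈ U. Then the order of singularity at x₀ is bounded on g₁ \ {0}: there exists N ∈ ℕ such that every nonzero v ∈ g₁ has some partial derivative of order at most N not vanishing at x₀. -/

import Mathlib

/-- for a finite-dimensional real vector space `g₁` of real-analytic
vector fields on a connected open set `U ⊆ ℝⁿ` and `x₀ ∈ U`, the order of
singularity at `x₀` is bounded on the nonzero elements of `g₁`: there is `N ∈ ℕ`
such that every `v ∈ g₁` which is not identically zero on `U` has some partial
derivative of order at most `N` not vanishing at `x₀`. -/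
theorem stmt3 {n : ℕ} (U : Set (Fin n → ℝ)) (hU : IsOpen U) (hUconn : IsConnected U)
    (x₀ : Fin n → ℝ) (hx₀ : x₀ ∈ U)
    (g₁ : Submodule ℝ ((Fin n → ℝ) → (Fin n → ℝ)))
    (hanalytic : ∀ v ∈ g₁, AnalyticOnNhd ℝ v U)
    (hfin : FiniteDimensional ℝ g₁) :
    ∃ N : ℕ, ∀ v ∈ g₁, (∃ x ∈ U, v x ≠ 0) →
      ∃ i ≤ N, iteratedFDeriv ℝ i v x₀ ≠ 0 := by
  classical
  have hUdiff : UniqueDiffOn ℝ U := hU.uniqueDiffOn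
  have hcd : ∀ (i : ℕ) (v : g₁), ContDiffOn ℝ i (v : (Fin n → ℝ) → (Fin n → ℝ)) U :=
    fun i v => (hanalytic v v.2).contDiffOn hUdiff
  -- the linear maps "i-th derivative at x₀" on g₁, using derivatives within U
  let L : ∀ i : ℕ, g₁ →ₗ[ℝ]
      ContinuousMultilinearMap ℝ (fun _ : Fin i => (Fin n → ℝ)) (Fin n → ℝ) := fun i =>
    { toFun := fun v => iteratedFDerivWithin ℝ i (v : (Fin n → ℝ) → (Fin n → ℝ)) U x₀
      map_add' := fun v w => by
        have := iteratedFDerivWithin_add_apply (𝕜 := ℝ) (i := i)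
          (hcd i v x₀ hx₀) (hcd i w x₀ hx₀) hUdiff hx₀
        simpa using this
      map_smul' := fun c v => by
        have := iteratedFDerivWithin_const_smul_apply (𝕜 := ℝ) (i := i) (a := c)
          (hcd i v x₀ hx₀) hUdiff hx₀
        simpa using this }
  -- the descending chain of subspaces
  let K : ℕ → Submodule ℝ g₁ := fun N => ⨅ i ≤ N, LinearMap.ker (L i)
  have hKmono : ∀ ⦃a b : ℕ⦄, a ≤ b → K b ≤ K a := fun a b hab =>
    biInf_mono fun i hi => le_trans hi hab
  have : IsArtinian ℝ g₁ := isArtinian_of_fg_of_artinian'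
  obtain ⟨N, hN⟩ := IsArtinian.monotone_stabilizes
    (⟨fun N => OrderDual.toDual (K N), fun a b hab => hKmono hab⟩ : ℕ →o (Submodule ℝ g₁)ᵒᵈ)
  refine ⟨N, fun v hv hvne => ?_⟩
  by_contra h
  push_neg at h
  -- all derivatives of order ≤ N vanish, so v ∈ K N
  have hmemN : (⟨v, hv⟩ : g₁) ∈ K N := by
    refine (Submodule.mem_iInf _).2 fun i => (Submodule.mem_iInf _).2 fun hi => ?_
    show iteratedFDerivWithin ℝ i v U x₀ = 0
    rw [iteratedFDerivWithin_of_isOpen i hU hx₀]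
    exact h i hi
  -- hence v ∈ K m for all m, so all derivatives vanish at x₀
  have hall : ∀ i : ℕ, iteratedFDeriv ℝ i v x₀ = 0 := by
    intro i
    have h1 : K N = K (max N i) := hN (max N i) (le_max_left _ _)
    have h2 : (⟨v, hv⟩ : g₁) ∈ K (max N i) := h1 ▸ hmemN
    have h3 : (⟨v, hv⟩ : g₁) ∈ LinearMap.ker (L i) :=
      (Submodule.mem_iInf _).1 ((Submodule.mem_iInf _).1 h2 i) (le_max_right _ _)
    have h4 : iteratedFDerivWithin ℝ i v U x₀ = 0 := h3
    rwa [iteratedFDerivWithin_of_isOpen i hU hx₀] at h4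
  -- by analyticity, v is eventually zero near x₀
  obtain ⟨p, r, hr⟩ := hanalytic v hv x₀ hx₀
  have hev : v =ᶠ[nhds x₀] 0 := by
    filter_upwards [EMetric.ball_mem_nhds x₀ hr.r_pos] with z hz
    have hy : z - x₀ ∈ Metric.eball (0 : Fin n → ℝ) r := by
      simpa [Metric.mem_eball, edist_eq_enorm_sub, edist_zero_right] using hz
    have hs := hr.hasSum_iteratedFDeriv hy
    have hz0 : (fun k : ℕ => ((k.factorial : ℝ)⁻¹ •
        iteratedFDeriv ℝ k v x₀ fun _ => z - x₀)) = fun _ => (0 : Fin n → ℝ) := by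
      funext k
      rw [hall k]
      simp
    rw [hz0] at hs
    have : v (x₀ + (z - x₀)) = 0 := hs.unique hasSum_zero
    simpa using this
  -- identity theorem: v vanishes on all of U, contradiction
  have hzero : Set.EqOn v 0 U :=
    (hanalytic v hv).eqOn_zero_of_preconnected_of_eventuallyEq_zero
      hUconn.isPreconnected hx₀ hev
  obtain ⟨x, hxU, hvx⟩ := hvne
  exact hvx (hzero hxU)
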